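/- Let d₁, d₂ ∈ [−1,1], let U, V ∈ SO(2), and let S = V·diag(d₁,d₂)·U. Then h₂((1+‖S e₁‖)/2) + h₂((1+‖S e₂‖)/2) ≥ h₂((1+d₁)/2) + h₂((1+d₂)/2), where S e₁ and S e₂ are the two columns of S. -/

import Mathlib

/-- Binary entropy function (base-2 logarithm), with the convention `0 * log 0 = 0`. -/
noncomputable def h2 (p : ℝ) : ℝ := -(p * Real.logb 2 p) - (1 - p) * Real.logb 2 (1 - p)

/-- `M` is a real 2×2 special orthogonal matrix. -/
def SO2 (M : Matrix (Fin 2) (Fin 2) ℝ) : Prop := M.transpose * M = 1 ∧ M.det = 1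

open Real Set

noncomputable def gfun (x : ℝ) : ℝ := Real.binEntropy ((1 + Real.sqrt x) / 2)

-- key inequality: log(1+u) - log(1-u) ≤ 2u/(1-u²) on (0,1)
lemma aux1 : ∀ u ∈ Set.Ioo (0:ℝ) 1,
    Real.log (1+u) - Real.log (1-u) ≤ 2*u/(1-u^2) := by
  have key : ∀ u ∈ Set.Ioo (-1:ℝ) 1,
      HasDerivAt (fun u => 2*u/(1-u^2) - (Real.log (1+u) - Real.log (1-u)))
        (4*u^2/(1-u^2)^2) u := by
    intro u hu
    have h1u : (1:ℝ) + u ≠ 0 := by nlinarith [hu.1, hu.2]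
    have h1u' : (1:ℝ) - u ≠ 0 := by nlinarith [hu.1, hu.2]
    have hden : (1:ℝ) - u^2 ≠ 0 := by nlinarith [hu.1, hu.2]
    have h1 : HasDerivAt (fun u : ℝ => 1 - u^2) (0 - 2*u) u :=
      (hasDerivAt_const u 1).sub (by simpa using hasDerivAt_pow 2 u)
    have h2 : HasDerivAt (fun u : ℝ => 2*u) 2 u := by
      simpa using (hasDerivAt_id u).const_mul (2:ℝ)
    have h3 := h2.div h1 hden
    have h4 : HasDerivAt (fun u : ℝ => Real.log (1+u)) (1/(1+u)) u := by
      simpa using (((hasDerivAt_id u).const_add 1).log h1u)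
    have h5 : HasDerivAt (fun u : ℝ => Real.log (1-u)) ((0-1)/(1-u)) u :=
      ((hasDerivAt_const u 1).sub (hasDerivAt_id u)).log h1u'
    have := h3.sub (h4.sub h5)
    refine this.congr_deriv ?_
    field_simp
    ring
  intro u hu
  have hsub : Set.Ico (0:ℝ) 1 ⊆ Set.Ioo (-1:ℝ) 1 := fun x hx => ⟨by linarith [hx.1], hx.2⟩
  have hmono : MonotoneOn (fun u => 2*u/(1-u^2) - (Real.log (1+u) - Real.log (1-u)))
      (Set.Ico (0:ℝ) 1) := by
    apply monotoneOn_of_deriv_nonneg (convex_Ico 0 1)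
    · exact fun x hx => ((key x (hsub hx)).continuousAt.continuousWithinAt)
    · intro x hx
      rw [interior_Ico] at hx
      exact ((key x (hsub (Ioo_subset_Ico_self hx))).differentiableAt.differentiableWithinAt)
    · intro x hx
      rw [interior_Ico] at hx
      rw [(key x (hsub (Ioo_subset_Ico_self hx))).deriv]
      positivity
  have h0 : (fun u => 2*u/(1-u^2) - (Real.log (1+u) - Real.log (1-u))) 0 = 0 := by norm_num
  have := hmono (by constructor <;> norm_num) (⟨hu.1.le, hu.2⟩ : u ∈ Set.Ico (0:ℝ) 1) hu.1.le
  rw [h0] at this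
  linarith [this]

-- φ(u) = (log(1+u) - log(1-u))/u is monotone on (0,1)
lemma aux2 : MonotoneOn (fun u : ℝ => (Real.log (1+u) - Real.log (1-u))/u)
    (Set.Ioo (0:ℝ) 1) := by
  have key : ∀ u ∈ Set.Ioo (0:ℝ) 1,
      HasDerivAt (fun u : ℝ => (Real.log (1+u) - Real.log (1-u))/u)
        (((1/(1+u) - (0-1)/(1-u))*u - (Real.log (1+u) - Real.log (1-u))*1)/u^2) u := by
    intro u hu
    have h1u : (1:ℝ) + u ≠ 0 := by nlinarith [hu.1, hu.2]
    have h1u' : (1:ℝ) - u ≠ 0 := by nlinarith [hu.1, hu.2]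
    have h4 : HasDerivAt (fun u : ℝ => Real.log (1+u)) (1/(1+u)) u := by
      simpa using (((hasDerivAt_id u).const_add 1).log h1u)
    have h5 : HasDerivAt (fun u : ℝ => Real.log (1-u)) ((0-1)/(1-u)) u :=
      ((hasDerivAt_const u 1).sub (hasDerivAt_id u)).log h1u'
    exact (h4.sub h5).div (hasDerivAt_id u) (ne_of_gt hu.1)
  apply monotoneOn_of_deriv_nonneg (convex_Ioo 0 1)
  · exact fun x hx => ((key x hx).continuousAt.continuousWithinAt)
  · intro x hx
    rw [interior_Ioo] at hx
    exact (key x hx).differentiableAt.differentiableWithinAt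
  · intro x hx
    rw [interior_Ioo] at hx
    rw [(key x hx).deriv]
    have h1u : (0:ℝ) < 1 + x := by linarith [hx.1]
    have h1u' : (0:ℝ) < 1 - x := by linarith [hx.2]
    have hL := aux1 x hx
    have hne : (1:ℝ) - x^2 ≠ 0 := by nlinarith
    have heq : (1/(1+x) - (0-1)/(1-x))*x = 2*x/(1-x^2) := by
      field_simp
      ring
    rw [heq]
    have h2 : (0:ℝ) ≤ 2*x/(1-x^2) - (Real.log (1+x) - Real.log (1-x)) := by linarith
    apply div_nonneg (by linarith) (by positivity)

lemma gfun_concave : ConcaveOn ℝ (Set.Icc (0:ℝ) 1) gfun := by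
  have hderiv : ∀ x ∈ Set.Ioo (0:ℝ) 1,
      HasDerivAt gfun ((Real.log (1 - Real.sqrt x) - Real.log (1 + Real.sqrt x)) / (4 * Real.sqrt x)) x := by
    intro x hx
    have hs0 : 0 < Real.sqrt x := Real.sqrt_pos.2 hx.1
    have hs1 : Real.sqrt x < 1 := by
      calc Real.sqrt x < Real.sqrt 1 := Real.sqrt_lt_sqrt hx.1.le hx.2
      _ = 1 := Real.sqrt_one
    set u := Real.sqrt x with hu
    have hsd : HasDerivAt Real.sqrt (1/(2*u)) x := Real.hasDerivAt_sqrt (ne_of_gt hx.1)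
    have hpd : HasDerivAt (fun x : ℝ => (1 + Real.sqrt x)/2) (1/(2*u)/2) x :=
      (hsd.const_add 1).div_const 2
    have hp0 : (1 + u)/2 ≠ 0 := by positivity
    have hp1 : (1 + u)/2 ≠ 1 := by intro h; nlinarith [hs1]
    have hbd := Real.hasDerivAt_binEntropy hp0 hp1
    have := hbd.comp x hpd
    refine this.congr_deriv ?_
    have e1 : 1 - (1+u)/2 = (1-u)/2 := by ring
    rw [e1, Real.log_div (by linarith) (by norm_num), Real.log_div (by positivity) (by norm_num)]
    field_simp
    ring_nf
  apply AntitoneOn.concaveOn_of_deriv (convex_Icc 0 1)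
  · have : Continuous gfun := Real.binEntropy_continuous.comp (by fun_prop)
    exact this.continuousOn
  · intro x hx
    rw [interior_Icc] at hx
    exact (hderiv x hx).differentiableAt.differentiableWithinAt
  · intro x hx y hy hxy
    rw [interior_Icc] at hx hy
    rw [(hderiv x hx).deriv, (hderiv y hy).deriv]
    have hsx : Real.sqrt x ∈ Set.Ioo (0:ℝ) 1 := by
      constructor
      · exact Real.sqrt_pos.2 hx.1
      · calc Real.sqrt x < Real.sqrt 1 := Real.sqrt_lt_sqrt hx.1.le hx.2
          _ = 1 := Real.sqrt_one
    have hsy : Real.sqrt y ∈ Set.Ioo (0:ℝ) 1 := by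
      constructor
      · exact Real.sqrt_pos.2 hy.1
      · calc Real.sqrt y < Real.sqrt 1 := Real.sqrt_lt_sqrt hy.1.le hy.2
          _ = 1 := Real.sqrt_one
    have hmono := aux2 hsx hsy (Real.sqrt_le_sqrt hxy)
    simp only at hmono
    have e1 : ∀ u : ℝ, 0 < u → (Real.log (1 - u) - Real.log (1 + u)) / (4 * u)
        = -((Real.log (1+u) - Real.log (1-u))/u) / 4 := by
      intro u hu; field_simp; ring_nf
    rw [e1 _ hsx.1, e1 _ hsy.1]
    linarith

lemma gfun_two_point {a b t : ℝ} (ha : a ∈ Set.Icc (0:ℝ) 1) (hb : b ∈ Set.Icc (0:ℝ) 1)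
    (ht : t ∈ Set.Icc (0:ℝ) 1) :
    gfun a + gfun b ≤ gfun (t*a + (1-t)*b) + gfun ((1-t)*a + t*b) := by
  have h1 := gfun_concave.2 ha hb (show (0:ℝ) ≤ t from ht.1)
    (show (0:ℝ) ≤ 1 - t by linarith [ht.2]) (by ring)
  have h2 := gfun_concave.2 ha hb (show (0:ℝ) ≤ 1 - t by linarith [ht.2])
    (show (0:ℝ) ≤ t from ht.1) (by ring)
  simp only [smul_eq_mul] at h1 h2
  linarith

lemma h2_eq (p : ℝ) : h2 p = Real.binEntropy p / Real.log 2 := by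
  unfold h2 Real.binEntropy Real.logb
  rw [Real.log_inv, Real.log_inv]
  ring

lemma h2_sym (d : ℝ) : h2 ((1 + d) / 2) = gfun (d^2) / Real.log 2 := by
  rw [h2_eq]
  congr 1
  unfold gfun
  rw [Real.sqrt_sq_eq_abs]
  rcases abs_cases d with ⟨h, _⟩ | ⟨h, _⟩
  · rw [h]
  · rw [h, show (1 + -d)/2 = 1 - (1+d)/2 by ring, Real.binEntropy_one_sub]

theorem stmt10 (d1 d2 : ℝ) (hd1 : d1 ∈ Set.Icc (-1 : ℝ) 1) (hd2 : d2 ∈ Set.Icc (-1 : ℝ) 1)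
    (U V : Matrix (Fin 2) (Fin 2) ℝ) (hU : SO2 U) (hV : SO2 V)
    (S : Matrix (Fin 2) (Fin 2) ℝ)
    (hS : S = V * Matrix.diagonal ![d1, d2] * U) :
    h2 ((1 + d1) / 2) + h2 ((1 + d2) / 2) ≤
      h2 ((1 + Real.sqrt ((S 0 0) ^ 2 + (S 1 0) ^ 2)) / 2) +
        h2 ((1 + Real.sqrt ((S 0 1) ^ 2 + (S 1 1) ^ 2)) / 2) := by
  -- entry formulas for S
  have hSij : ∀ i j, S i j = V i 0 * (d1 * U 0 j) + V i 1 * (d2 * U 1 j) := by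
    intro i j
    rw [hS]
    simp [Matrix.mul_apply, Fin.sum_univ_two, Matrix.diagonal_apply]
    fin_cases i <;> fin_cases j <;> simp <;> ring
  -- orthogonality relations for V
  have v1 := congrFun (congrFun hV.1 0) 0
  have v2 := congrFun (congrFun hV.1 1) 1
  have v3 := congrFun (congrFun hV.1 0) 1
  simp [Matrix.mul_apply, Fin.sum_univ_two, Matrix.transpose_apply, Matrix.one_apply] at v1 v2 v3
  -- orthogonality relations for U
  have hU' : U * U.transpose = 1 := mul_eq_one_comm.mp hU.1
  have u1 := congrFun (congrFun hU.1 0) 0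
  have u2 := congrFun (congrFun hU.1 1) 1
  have u3 := congrFun (congrFun hU' 0) 0
  simp [Matrix.mul_apply, Fin.sum_univ_two, Matrix.transpose_apply, Matrix.one_apply] at u1 u2 u3
  -- column norms of S
  have hcol : ∀ j, S 0 j^2 + S 1 j^2 = d1^2 * (U 0 j)^2 + d2^2 * (U 1 j)^2 := by
    intro j
    rw [hSij 0 j, hSij 1 j]
    linear_combination (d1 * U 0 j)^2 * v1 + (d2 * U 1 j)^2 * v2
      + 2 * (d1 * U 0 j) * (d2 * U 1 j) * v3
  set t : ℝ := (U 0 0)^2 with htdef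
  have hU10 : (U 1 0)^2 = 1 - t := by nlinarith [u1]
  have hU01 : (U 0 1)^2 = 1 - t := by nlinarith [u3]
  have hU11 : (U 1 1)^2 = t := by nlinarith [u2, hU01]
  have hx0 : S 0 0^2 + S 1 0^2 = t * d1^2 + (1-t) * d2^2 := by
    rw [hcol 0, hU10]; ring
  have hx1 : S 0 1^2 + S 1 1^2 = (1-t) * d1^2 + t * d2^2 := by
    rw [hcol 1, hU01, hU11]; ring
  have ha : d1^2 ∈ Set.Icc (0:ℝ) 1 := ⟨sq_nonneg _, by nlinarith [hd1.1, hd1.2]⟩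
  have hb : d2^2 ∈ Set.Icc (0:ℝ) 1 := ⟨sq_nonneg _, by nlinarith [hd2.1, hd2.2]⟩
  have ht : t ∈ Set.Icc (0:ℝ) 1 := ⟨sq_nonneg _, by linarith [sq_nonneg (U 1 0), hU10]⟩
  have key := gfun_two_point ha hb ht
  -- rewrite everything via gfun
  have e0 : h2 ((1 + Real.sqrt (S 0 0^2 + S 1 0^2)) / 2) = gfun (S 0 0^2 + S 1 0^2) / Real.log 2 := by
    rw [h2_eq]
    congr 1
  have e1 : h2 ((1 + Real.sqrt (S 0 1^2 + S 1 1^2)) / 2) = gfun (S 0 1^2 + S 1 1^2) / Real.log 2 := by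
    rw [h2_eq]
    congr 1
  rw [h2_sym, h2_sym, e0, e1, hx0, hx1]
  have hlog : (0:ℝ) < Real.log 2 := Real.log_pos (by norm_num)
  rw [← add_div, ← add_div, div_le_div_iff_of_pos_right hlog]
  exact key
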